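/- Let f : ℝ × ℝ^l × ℝ^d → ℝ^l be continuous in (t, u) and uniformly Lipschitz in s, let T > 0, q ∈ ℕ, and let u : [0, qT] → ℝ^d be constant on each interval [jT, (j+1)T) for j < q. Then for any initial value s₀ ∈ ℝ^l there exists a unique continuous function s* : [0, qT] → ℝ^l with s*(0) = s₀ that satisfies s'(t) = f(t, s(t), u(t)) on each open interval (jT, (j+1)T) for j < q. -/

import Mathlib

open Set Real Filter Topology

section Aux

variable {E : Type*} [NormedAddCommGroup E] [NormedSpace ℝ E] [CompleteSpace E]

private lemma contOn_union_closed {X Y : Type*} [TopologicalSpace X] [TopologicalSpace Y]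
    {s t : Set X} {g : X → Y} (hsc : IsClosed s) (htc : IsClosed t)
    (hs : ContinuousOn g s) (ht : ContinuousOn g t) : ContinuousOn g (s ∪ t) := by
  intro x hx
  rcases hx with hx | hx
  · refine (hs x hx).union ?_
    by_cases h : x ∈ t
    · exact ht x h
    · exact continuousWithinAt_of_notMem_closure (by rwa [htc.closure_eq])
  · refine ContinuousWithinAt.union ?_ (ht x hx)
    by_cases h : x ∈ s
    · exact hs x h
    · exact continuousWithinAt_of_notMem_closure (by rwa [hsc.closure_eq])

private lemma pl_step (v : ℝ → E → E) (K' : NNReal) (hl : ∀ t, LipschitzWith K' (v t))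
    (hc : ∀ x, Continuous fun t => v t x) {δ : ℝ} (hδ : 0 < δ) (hKδ : (K' : ℝ) * δ ≤ 1/2)
    (c : ℝ) (x₀ : E) :
    ∃ α : ℝ → E, α c = x₀ ∧
      ∀ t ∈ Icc c (c+δ), HasDerivWithinAt α (v t (α t)) (Icc c (c+δ)) t := by
  obtain ⟨M₀, hM⟩ := (isCompact_Icc (a := c) (b := c + δ)).exists_bound_of_continuousOn
    (f := fun t => v t x₀) ((hc x₀).continuousOn)
  set M := max M₀ 0 with hMdef
  have hM0 : 0 ≤ M := le_max_right _ _
  have hM' : ∀ t ∈ Icc c (c+δ), ‖v t x₀‖ ≤ M := fun t ht => (hM t ht).trans (le_max_left _ _)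
  have hK0 : (0:ℝ) ≤ K' := K'.coe_nonneg
  have hpl : IsPicardLindelof v (tmin := c) (tmax := c+δ) ⟨c, le_refl c, by linarith⟩ x₀
      ⟨2*M*δ, by positivity⟩ 0 ⟨M + K' * (2*M*δ), by positivity⟩ K' :=
    { lipschitzOnWith := fun t _ => (hl t).lipschitzOnWith
      continuousOn := fun x _ => (hc x).continuousOn
      norm_le := fun t ht x hx => by
        have h1 : ‖v t x - v t x₀‖ ≤ (K' : ℝ) * ‖x - x₀‖ := by
          simpa [dist_eq_norm] using (hl t).dist_le_mul x x₀
        have h2 : ‖x - x₀‖ ≤ 2*M*δ := by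
          have := Metric.mem_closedBall.mp hx
          rw [dist_eq_norm] at this
          exact this
        have h3 : ‖v t x‖ ≤ ‖v t x - v t x₀‖ + ‖v t x₀‖ := by
          simpa using norm_add_le (v t x - v t x₀) (v t x₀)
        have h4 := hM' t ht
        show ‖v t x‖ ≤ M + K' * (2*M*δ)
        nlinarith [mul_le_mul_of_nonneg_left h2 hK0]
      mul_max_le := by
        have hmax : max (c+δ-c) (c-c) = δ := by
          rw [add_sub_cancel_left, sub_self, max_eq_left hδ.le]
        simp only [NNReal.coe_mk, NNReal.coe_zero, sub_zero]
        rw [hmax]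
        show (M + K' * (2*M*δ)) * δ ≤ 2*M*δ
        nlinarith [mul_le_mul_of_nonneg_right hKδ (by positivity : (0:ℝ) ≤ 2*M*δ), hM0, hδ.le] }
  exact hpl.exists_eq_forall_mem_Icc_hasDerivWithinAt₀

private lemma pl_iter (v : ℝ → E → E) (K' : NNReal) (hl : ∀ t, LipschitzWith K' (v t))
    (hc : ∀ x, Continuous fun t => v t x) {δ : ℝ} (hδ : 0 < δ) (hKδ : (K' : ℝ) * δ ≤ 1/2) :
    ∀ (n : ℕ) (c : ℝ) (x₀ : E), ∃ α : ℝ → E, α c = x₀ ∧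
      ∀ t ∈ Icc c (c + n*δ), HasDerivWithinAt α (v t (α t)) (Icc c (c + n*δ)) t := by
  intro n
  induction n with
  | zero =>
      intro c x₀
      obtain ⟨α, h0, hα⟩ := pl_step v K' hl hc hδ hKδ c x₀
      refine ⟨α, h0, fun t ht => ?_⟩
      have hsub : Icc c (c + (0:ℕ)*δ) ⊆ Icc c (c+δ) := by
        apply Icc_subset_Icc_right; push_cast; linarith
      exact (hα t (hsub ht)).mono hsub
  | succ n ih =>
      intro c x₀
      obtain ⟨α, hα0, hα⟩ := ih c x₀
      set c' := c + n*δ with hc'def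
      obtain ⟨β, hβ0, hβ⟩ := pl_step v K' hl hc hδ hKδ c' (α c')
      have hcc' : c ≤ c' := by
        have : (0:ℝ) ≤ (n:ℝ)*δ := by positivity
        linarith
      have hc'δ : c' ≤ c' + δ := by linarith
      have hend : c + ((n:ℕ)+1 : ℕ)*δ = c' + δ := by push_cast; ring
      refine ⟨fun t => if t ≤ c' then α t else β t, by simp [hcc', hα0], ?_⟩
      intro t ht
      rw [hend] at ht ⊢
      rcases lt_trichotomy t c' with hlt | heq | hgt
      · have hmem : Icc c c' ∈ 𝓝[Icc c (c'+δ)] t := by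
          rw [mem_nhdsWithin]
          exact ⟨Iio c', isOpen_Iio, hlt, fun x hx => ⟨hx.2.1, hx.1.le⟩⟩
        have hd := (hα t ⟨ht.1, hlt.le⟩).mono_of_mem_nhdsWithin hmem
        have hev : (fun t => if t ≤ c' then α t else β t) =ᶠ[𝓝[Icc c (c'+δ)] t] α := by
          filter_upwards [hmem] with x hx
          exact if_pos hx.2
        beta_reduce
        rw [if_pos hlt.le]
        exact hd.congr_of_eventuallyEq hev (if_pos hlt.le)
      · rw [heq]
        beta_reduce
        rw [if_pos (le_refl c')]
        have h1 : HasDerivWithinAt (fun t => if t ≤ c' then α t else β t)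
            (v c' (α c')) (Icc c c') c' :=
          (hα c' ⟨hcc', le_rfl⟩).congr (fun x hx => if_pos hx.2) (if_pos le_rfl)
        have h2' := hβ c' ⟨le_rfl, hc'δ⟩
        rw [hβ0] at h2'
        have h2 : HasDerivWithinAt (fun t => if t ≤ c' then α t else β t)
            (v c' (α c')) (Icc c' (c'+δ)) c' := by
          refine h2'.congr (fun x hx => ?_) ((if_pos le_rfl).trans hβ0.symm)
          by_cases h : x ≤ c'
          · have hx' : x = c' := le_antisymm h hx.1
            rw [if_pos h, hx', hβ0]
          · rw [if_neg h]
        have := h1.union h2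
        rwa [Icc_union_Icc_eq_Icc hcc' hc'δ] at this
      · have hmem : Icc c' (c'+δ) ∈ 𝓝[Icc c (c'+δ)] t := by
          rw [mem_nhdsWithin]
          exact ⟨Ioi c', isOpen_Ioi, hgt, fun x hx => ⟨hx.1.le, hx.2.2⟩⟩
        have hd := (hβ t ⟨hgt.le, ht.2⟩).mono_of_mem_nhdsWithin hmem
        have hmem2 : Ioi c' ∈ 𝓝[Icc c (c'+δ)] t :=
          mem_nhdsWithin_of_mem_nhds (Ioi_mem_nhds hgt)
        have hev : (fun t => if t ≤ c' then α t else β t) =ᶠ[𝓝[Icc c (c'+δ)] t] β := by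
          filter_upwards [hmem2] with x hx
          exact if_neg (not_le.mpr hx)
        beta_reduce
        rw [if_neg (not_le.mpr hgt)]
        exact hd.congr_of_eventuallyEq hev (if_neg (not_le.mpr hgt))

private lemma pl_global (v : ℝ → E → E) (K' : NNReal) (hl : ∀ t, LipschitzWith K' (v t))
    (hc : ∀ x, Continuous fun t => v t x) (a b : ℝ) (x₀ : E) :
    ∃ α : ℝ → E, α a = x₀ ∧
      ∀ t ∈ Icc a b, HasDerivWithinAt α (v t (α t)) (Icc a b) t := by
  set δ : ℝ := (2*((K':ℝ)+1))⁻¹ with hδdef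
  have hK0 : (0:ℝ) ≤ K' := K'.coe_nonneg
  have hδ : 0 < δ := by positivity
  have hKδ : (K':ℝ)*δ ≤ 1/2 := by
    rw [hδdef, mul_inv_le_iff₀ (by positivity)]
    linarith
  obtain ⟨n, hn⟩ : ∃ n : ℕ, b ≤ a + n * δ := by
    refine ⟨⌈(b - a)/δ⌉₊, ?_⟩
    have h1 : (b-a)/δ ≤ (⌈(b-a)/δ⌉₊ : ℝ) := Nat.le_ceil _
    have h2 := (div_le_iff₀ hδ).mp h1
    linarith
  obtain ⟨α, h0, hα⟩ := pl_iter v K' hl hc hδ hKδ n a x₀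
  exact ⟨α, h0, fun t ht =>
    (hα t ⟨ht.1, ht.2.trans hn⟩).mono (Icc_subset_Icc_right hn)⟩

private lemma uniq_piece (v : ℝ → E → E) (K' : NNReal) (hl : ∀ t, LipschitzWith K' (v t))
    {a b : ℝ} {s s₂ : ℝ → E}
    (hs : ContinuousOn s (Icc a b)) (hs' : ∀ t ∈ Ioo a b, HasDerivAt s (v t (s t)) t)
    (hg : ContinuousOn s₂ (Icc a b)) (hg' : ∀ t ∈ Ioo a b, HasDerivAt s₂ (v t (s₂ t)) t)
    (heq : s a = s₂ a) : EqOn s s₂ (Icc a b) := by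
  intro t' ht'
  rcases eq_or_lt_of_le ht'.1 with h | h
  · rw [← h]; exact heq
  · have key : ∀ a' ∈ Ioo a t',
        dist (s t') (s₂ t') ≤ dist (s a') (s₂ a') * exp ((K':ℝ) * (b - a)) := by
      intro a' ha'
      have hIcc : Icc a' t' ⊆ Icc a b := Icc_subset_Icc ha'.1.le ht'.2
      have hIoo : Ico a' t' ⊆ Ioo a b := fun x hx =>
        ⟨ha'.1.trans_le hx.1, hx.2.trans_le ht'.2⟩
      have hmain := dist_le_of_trajectories_ODE (v := v) hl
        (hs.mono hIcc) (fun t ht => (hs' t (hIoo ht)).hasDerivWithinAt)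
        (hg.mono hIcc) (fun t ht => (hg' t (hIoo ht)).hasDerivWithinAt)
        le_rfl t' ⟨ha'.2.le, le_rfl⟩
      refine hmain.trans ?_
      have hexp : exp ((K':ℝ)*(t' - a')) ≤ exp ((K':ℝ)*(b - a)) := by
        apply exp_le_exp.mpr
        apply mul_le_mul_of_nonneg_left _ K'.coe_nonneg
        have h1 := ha'.1
        have h2 := ht'.2
        linarith
      exact mul_le_mul_of_nonneg_left hexp dist_nonneg
    haveI hne : (𝓝[Ioo a t'] a).NeBot := by
      apply mem_closure_iff_nhdsWithin_neBot.mp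
      rw [closure_Ioo h.ne]
      exact ⟨le_rfl, h.le⟩
    have hsub : Ioo a t' ⊆ Icc a b := fun x hx => ⟨hx.1.le, hx.2.le.trans ht'.2⟩
    have h1 : ContinuousWithinAt s (Ioo a t') a :=
      (hs a ⟨le_rfl, h.le.trans ht'.2⟩).mono hsub
    have h2 : ContinuousWithinAt s₂ (Ioo a t') a :=
      (hg a ⟨le_rfl, h.le.trans ht'.2⟩).mono hsub
    have hlim : Tendsto (fun a' => dist (s a') (s₂ a') * exp ((K':ℝ)*(b-a)))
        (𝓝[Ioo a t'] a) (𝓝 0) := by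
      have hd : Tendsto (fun a' => dist (s a') (s₂ a')) (𝓝[Ioo a t'] a)
          (𝓝 (dist (s a) (s₂ a))) := h1.dist h2
      rw [heq, dist_self] at hd
      simpa using hd.mul_const (exp ((K':ℝ)*(b-a)))
    have hle : dist (s t') (s₂ t') ≤ 0 :=
      ge_of_tendsto hlim (eventually_of_mem self_mem_nhdsWithin key)
    exact dist_le_zero.mp hle

end Aux

theorem piecewise_ode_existence_uniqueness (l d : ℕ)
    (f : ℝ → EuclideanSpace ℝ (Fin l) → EuclideanSpace ℝ (Fin d) → EuclideanSpace ℝ (Fin l))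
    (hcont : ∀ s : EuclideanSpace ℝ (Fin l),
      Continuous fun p : ℝ × EuclideanSpace ℝ (Fin d) => f p.1 s p.2)
    (K : ℝ)
    (hlip : ∀ (t : ℝ) (u : EuclideanSpace ℝ (Fin d)) (s₁ s₂ : EuclideanSpace ℝ (Fin l)),
      ‖f t s₁ u - f t s₂ u‖ ≤ K * ‖s₁ - s₂‖)
    (T : ℝ) (hT : 0 < T) (q : ℕ)
    (u : ℝ → EuclideanSpace ℝ (Fin d))
    (hu : ∀ j : ℕ, j < q → ∀ t ∈ Set.Ico ((j : ℝ) * T) (((j : ℝ) + 1) * T),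
      u t = u ((j : ℝ) * T))
    (s₀ : EuclideanSpace ℝ (Fin l)) :
    ∃ s : ℝ → EuclideanSpace ℝ (Fin l),
      (ContinuousOn s (Set.Icc 0 ((q : ℝ) * T)) ∧ s 0 = s₀ ∧
        (∀ j : ℕ, j < q → ∀ t ∈ Set.Ioo ((j : ℝ) * T) (((j : ℝ) + 1) * T),
          HasDerivAt s (f t (s t) (u t)) t)) ∧
      (∀ s₂ : ℝ → EuclideanSpace ℝ (Fin l),
        (ContinuousOn s₂ (Set.Icc 0 ((q : ℝ) * T)) ∧ s₂ 0 = s₀ ∧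
          (∀ j : ℕ, j < q → ∀ t ∈ Set.Ioo ((j : ℝ) * T) (((j : ℝ) + 1) * T),
            HasDerivAt s₂ (f t (s₂ t) (u t)) t)) →
        Set.EqOn s s₂ (Set.Icc 0 ((q : ℝ) * T))) := by
  have hE : Nonempty (EuclideanSpace ℝ (Fin l)) := ⟨0⟩
  obtain ⟨K', hK'⟩ : ∃ K' : NNReal, K ≤ (K' : ℝ) := ⟨Real.toNNReal K, Real.le_coe_toNNReal K⟩
  have hlip' : ∀ (t : ℝ) (c : EuclideanSpace ℝ (Fin d)),
      LipschitzWith K' (fun x : EuclideanSpace ℝ (Fin l) => f t x c) := by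
    intro t c
    apply LipschitzWith.of_dist_le_mul
    intro x y
    rw [dist_eq_norm, dist_eq_norm]
    calc ‖f t x c - f t y c‖ ≤ K * ‖x - y‖ := hlip t c x y
      _ ≤ (K' : ℝ) * ‖x - y‖ :=
        mul_le_mul_of_nonneg_right hK' (norm_nonneg _)
  have hcont' : ∀ (x : EuclideanSpace ℝ (Fin l)) (c : EuclideanSpace ℝ (Fin d)),
      Continuous fun t => f t x c := fun x c => by
    exact (hcont x).comp (continuous_id.prodMk continuous_const)
  -- existence by induction on the number of pieces
  have main : ∀ n : ℕ, ∃ s : ℝ → EuclideanSpace ℝ (Fin l), ContinuousOn s (Set.Icc 0 ((n:ℝ)*T)) ∧ s 0 = s₀ ∧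
      ∀ j : ℕ, j < n → ∀ t ∈ Set.Ioo ((j : ℝ) * T) (((j : ℝ) + 1) * T),
        HasDerivAt s (f t (s t) (u ((j:ℝ)*T))) t := by
    intro n
    induction n with
    | zero => exact ⟨fun _ => s₀, continuousOn_const, rfl, fun j hj => absurd hj (Nat.not_lt_zero j)⟩
    | succ n ih =>
      obtain ⟨σ, hσc, hσ0, hσd⟩ := ih
      set c' : ℝ := (n:ℝ)*T with hc'def
      have hc'0 : (0:ℝ) ≤ c' := by positivity
      have hc'lt : c' < ((n:ℝ)+1)*T := by nlinarith
      obtain ⟨β, hβ0, hβ⟩ := pl_global (fun t x => f t x (u c')) K'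
        (fun t => hlip' t _) (fun x => hcont' x _) c' (((n:ℝ)+1)*T) (σ c')
      have hend : ((n+1 : ℕ):ℝ)*T = ((n:ℝ)+1)*T := by push_cast; ring
      refine ⟨fun t => if t ≤ c' then σ t else β t, ?_, by simp [hc'0, hσ0], ?_⟩
      · rw [hend, show Set.Icc (0:ℝ) (((n:ℝ)+1)*T)
            = Set.Icc 0 c' ∪ Set.Icc c' (((n:ℝ)+1)*T) from
          (Set.Icc_union_Icc_eq_Icc hc'0 hc'lt.le).symm]
        apply contOn_union_closed isClosed_Icc isClosed_Icc
        · exact hσc.congr fun x hx => if_pos hx.2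
        · have hβc : ContinuousOn β (Set.Icc c' (((n:ℝ)+1)*T)) :=
            fun t ht => (hβ t ht).continuousWithinAt
          refine hβc.congr fun x hx => ?_
          by_cases h : x ≤ c'
          · have hx' : x = c' := le_antisymm h hx.1
            rw [if_pos h, hx', hβ0]
          · rw [if_neg h]
      · intro j hj t ht
        rcases Nat.lt_succ_iff_lt_or_eq.mp hj with hj' | hj'
        · have hjc : ((j:ℝ)+1)*T ≤ c' := by
            have : ((j:ℝ)+1) ≤ (n:ℝ) := by exact_mod_cast hj'
            rw [hc'def]
            nlinarith
          have hlt : t < c' := lt_of_lt_of_le ht.2 hjc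
          have hev : (fun t => if t ≤ c' then σ t else β t) =ᶠ[nhds t] σ := by
            filter_upwards [Iio_mem_nhds hlt] with x hx
            exact if_pos hx.le
          beta_reduce
          rw [if_pos hlt.le]
          exact (hσd j hj' t ht).congr_of_eventuallyEq hev
        · subst hj'
          have hd := (hβ t ⟨ht.1.le, ht.2.le⟩).hasDerivAt (Icc_mem_nhds ht.1 ht.2)
          have hev : (fun t => if t ≤ c' then σ t else β t) =ᶠ[nhds t] β := by
            filter_upwards [Ioi_mem_nhds ht.1] with x hx
            exact if_neg (not_le.mpr hx)
          beta_reduce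
          rw [if_neg (not_le.mpr ht.1)]
          exact hd.congr_of_eventuallyEq hev
  obtain ⟨s, hsc, hs0, hsd⟩ := main q
  have hsd' : ∀ j : ℕ, j < q → ∀ t ∈ Set.Ioo ((j : ℝ) * T) (((j : ℝ) + 1) * T),
      HasDerivAt s (f t (s t) (u t)) t := by
    intro j hj t ht
    rw [hu j hj t ⟨ht.1.le, ht.2⟩]
    exact hsd j hj t ht
  refine ⟨s, ⟨hsc, hs0, hsd'⟩, ?_⟩
  rintro s₂ ⟨hs₂c, hs₂0, hs₂d⟩
  -- uniqueness by induction on the number of pieces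
  have step : ∀ n : ℕ, n ≤ q → Set.EqOn s s₂ (Set.Icc 0 ((n:ℝ)*T)) := by
    intro n
    induction n with
    | zero =>
      intro _ x hx
      simp only [Nat.cast_zero, zero_mul] at hx
      have : x = 0 := le_antisymm hx.2 hx.1
      rw [this, hs0, hs₂0]
    | succ n ih =>
      intro hn x hx
      have hn' : n ≤ q := Nat.le_of_succ_le hn
      have hnq : n < q := hn
      have ihh := ih hn'
      have h0n : (0:ℝ) ≤ (n:ℝ)*T := by positivity
      have hnn1 : (n:ℝ)*T ≤ ((n:ℝ)+1)*T := by nlinarith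
      have hsubQ : Set.Icc ((n:ℝ)*T) (((n:ℝ)+1)*T) ⊆ Set.Icc 0 ((q:ℝ)*T) := by
        apply Set.Icc_subset_Icc h0n
        have : ((n:ℝ)+1) ≤ (q:ℝ) := by exact_mod_cast hn
        nlinarith
      have hpiece : Set.EqOn s s₂ (Set.Icc ((n:ℝ)*T) (((n:ℝ)+1)*T)) := by
        apply uniq_piece (fun t x => f t x (u t)) K' (fun t => hlip' t (u t))
          (hsc.mono hsubQ) (hsd' n hnq) (hs₂c.mono hsubQ) (hs₂d n hnq)
        exact ihh ⟨h0n, le_rfl⟩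
      have hxcast : ((n+1 : ℕ):ℝ)*T = ((n:ℝ)+1)*T := by push_cast; ring
      rw [hxcast] at hx
      rw [← Set.Icc_union_Icc_eq_Icc h0n hnn1] at hx
      exact hx.elim (fun h => ihh h) (fun h => hpiece h)
  have := step q le_rfl
  exact this
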